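/- If G is a connected graph of diameter D and 2 ≤ k ≤ D, then gp_k(G) ≥ 2⌈(D+1)/(k+1)⌉ − 1 when D ≡ 0 (mod k+1), and gp_k(G) ≥ 2⌈(D+1)/(k+1)⌉ otherwise. -/
import Mathlib


/-- `S` is a general `d`-position set of `G`: no three distinct vertices of `S`
lie on a common geodesic of length at most `d`. -/
def IsGenDPos {V : Type*} (G : SimpleGraph V) (d : ℕ) (S : Set V) : Prop :=
  ∀ ⦃u v w : V⦄, u ∈ S → v ∈ S → w ∈ S → u ≠ v → u ≠ w → v ≠ w →
    G.dist u v + G.dist v w = G.dist u w → G.dist u w ≤ d → False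

/-- The general `d`-position number of `G`. -/
noncomputable def gpNum {V : Type*} (G : SimpleGraph V) (d : ℕ) : ℕ :=
  sSup {n | ∃ S : Set V, IsGenDPos G d S ∧ S.ncard = n}

private lemma arith_key {K : ℕ} (hK : 3 ≤ K) {P : ℕ → ℕ}
    (hmono : ∀ x y, x < y → P x < P y)
    (hgap : ∀ x y, x + 2 ≤ y → P x + K ≤ P y)
    {i j l : ℕ} (hij : i ≠ j) (hil : i ≠ l) (hjl : j ≠ l)
    (heq : (max (P i) (P j) - min (P i) (P j)) + (max (P j) (P l) - min (P j) (P l))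
      = max (P i) (P l) - min (P i) (P l))
    (hle : max (P i) (P l) - min (P i) (P l) + 1 ≤ K) : False := by
  rcases lt_trichotomy i j with h1 | h1 | h1
  · rcases lt_trichotomy j l with h2 | h2 | h2
    · -- i < j < l
      have a1 := hmono i j h1; have a2 := hmono j l h2
      have a3 := hmono i l (h1.trans h2)
      have a4 := hgap i l (by omega)
      omega
    · exact hjl h2
    · rcases lt_trichotomy i l with h3 | h3 | h3
      · -- i < l < j
        have a1 := hmono i l h3; have a2 := hmono l j h2
        have a3 := hmono i j h1
        omega
      · exact hil h3
      · -- l < i < j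
        have a1 := hmono l i h3; have a2 := hmono i j h1
        have a3 := hmono l j (h3.trans h1)
        omega
  · exact hij h1
  · rcases lt_trichotomy j l with h2 | h2 | h2
    · rcases lt_trichotomy i l with h3 | h3 | h3
      · -- j < i < l
        have a1 := hmono j i h1; have a2 := hmono i l h3
        have a3 := hmono j l h2
        omega
      · exact hil h3
      · -- j < l < i
        have a1 := hmono j l h2; have a2 := hmono l i h3
        have a3 := hmono j i h1
        omega
    · exact hjl h2
    · -- l < j < i
      have a1 := hmono l j h2; have a2 := hmono j i h1
      have a3 := hmono l i (h2.trans h1)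
      have a4 := hgap l i (by omega)
      omega

private lemma pos_key {K : ℕ} (hK : 3 ≤ K) {x y : ℕ} (hxy : x < y) :
    K * (x / 2) + x % 2 < K * (y / 2) + y % 2 ∧
    (x + 2 ≤ y → K * (x / 2) + x % 2 + K ≤ K * (y / 2) + y % 2) := by
  have hx := Nat.div_add_mod x 2
  have hy := Nat.div_add_mod y 2
  have hx2 : x % 2 < 2 := Nat.mod_lt _ (by norm_num)
  have hy2 : y % 2 < 2 := Nat.mod_lt _ (by norm_num)
  have hab : x / 2 ≤ y / 2 := Nat.div_le_div_right hxy.le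
  rcases eq_or_lt_of_le hab with h | h
  · have hmm : x % 2 < y % 2 := by omega
    rw [h]
    exact ⟨Nat.add_lt_add_left hmm _, fun h2 => absurd h2 (by omega)⟩
  · rcases eq_or_lt_of_le (Nat.succ_le_of_lt h) with h' | h'
    · have hKe : K * (y / 2) = K * (x / 2) + K := by
        rw [← h', Nat.mul_succ]
      constructor
      · have hxk : x % 2 < K := by omega
        rw [hKe]; omega
      · intro h2
        have hmm : x % 2 ≤ y % 2 := by omega
        rw [hKe]; omega
    · have hKe : K * (x / 2) + 2 * K ≤ K * (y / 2) := by
        have h2 : K * (x / 2 + 2) ≤ K * (y / 2) := Nat.mul_le_mul_left K (by omega)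
        rw [Nat.mul_add] at h2; omega
      have hxk : x % 2 < K := by omega
      exact ⟨by omega, fun _ => by omega⟩

/-- Lower bound for gp_k in terms of the diameter D of a connected graph. -/
theorem stmt_5 {V : Type*} [Finite V] (G : SimpleGraph V) (hG : G.Connected)
    (k : ℕ) (hk : 2 ≤ k) (hkD : k ≤ G.diam) :
    (if G.diam % (k + 1) = 0 then 2 * ((G.diam + 1 + k) / (k + 1)) - 1
      else 2 * ((G.diam + 1 + k) / (k + 1))) ≤ gpNum G k := by
  classical
  have hV : Nonempty V := hG.nonempty
  obtain ⟨u, v, huv⟩ := G.exists_dist_eq_diam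
  obtain ⟨p, hp⟩ := hG.exists_walk_length_eq_dist u v
  set D := G.diam with hDdef
  set K := k + 1 with hKdef
  have hK3 : 3 ≤ K := by omega
  have hpl : p.length = D := by rw [hp, huv]
  -- upper bound on distance along the walk
  have hle : ∀ i j : ℕ, i ≤ j → j ≤ D → G.dist (p.getVert i) (p.getVert j) ≤ j - i := by
    intro i j hij
    induction j, hij using Nat.le_induction with
    | base => intro _; simp
    | succ n hn ih =>
      intro hn1
      have h1 : G.dist (p.getVert n) (p.getVert (n + 1)) ≤ 1 := by
        have hadj := p.adj_getVert_succ (i := n) (by omega)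
        have := SimpleGraph.dist_le hadj.toWalk
        simpa [SimpleGraph.Adj.toWalk] using this
      have h2 := ih (by omega)
      have h3 := hG.dist_triangle (u := p.getVert i) (v := p.getVert n) (w := p.getVert (n + 1))
      omega
  -- exact distance along the geodesic
  have hdist : ∀ i j : ℕ, i ≤ j → j ≤ D → G.dist (p.getVert i) (p.getVert j) = j - i := by
    intro i j hij hj
    refine le_antisymm (hle i j hij hj) ?_
    have h1 : G.dist u (p.getVert i) ≤ i := by
      have := hle 0 i (Nat.zero_le _) (hij.trans hj)
      simpa using this
    have h2 : G.dist (p.getVert j) v ≤ D - j := by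
      have := hle j D hj le_rfl
      rw [← hpl] at this ⊢
      simpa [p.getVert_length] using this
    have t1 := hG.dist_triangle (u := u) (v := p.getVert i) (w := p.getVert j)
    have t2 := hG.dist_triangle (u := u) (v := p.getVert j) (w := v)
    omega
  set q := D / K with hq
  set r := D % K with hr
  have hDqr : K * q + r = D := Nat.div_add_mod D K
  have hrK : r < K := Nat.mod_lt _ (by omega)
  set m : ℕ := if r = 0 then 2 * q + 1 else 2 * q + 2 with hm
  -- the positions along the geodesic
  set pos : ℕ → ℕ := fun j => K * (j / 2) + j % 2 with hposdef
  have key : ∀ x y : ℕ, x < y → pos x < pos y ∧ (x + 2 ≤ y → pos x + K ≤ pos y) := by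
    intro x y hxy
    exact pos_key hK3 hxy
  have hposD : ∀ j, j < m → pos j ≤ D := by
    intro j hj
    have hlast : pos (m - 1) ≤ D := by
      by_cases h0 : r = 0
      · have : m - 1 = 2 * q := by simp [hm, h0]
        rw [this]
        show K * (2 * q / 2) + 2 * q % 2 ≤ D
        rw [Nat.mul_div_cancel_left q (by norm_num : 0 < 2), Nat.mul_mod_right]
        omega
      · have : m - 1 = 2 * q + 1 := by simp [hm, h0]
        rw [this]
        show K * ((2 * q + 1) / 2) + (2 * q + 1) % 2 ≤ D
        rw [Nat.mul_add_div (by norm_num) q 1, Nat.mul_add_mod 2 q 1]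
        simp
        omega
    rcases eq_or_lt_of_le (Nat.le_sub_one_of_lt hj) with h | h
    · rw [h]; exact hlast
    · exact le_trans (key j (m - 1) h).1.le hlast
  set f : ℕ → V := fun j => p.getVert (pos j) with hf
  have hfd : ∀ x y, x < y → y < m → G.dist (f x) (f y) = pos y - pos x := by
    intro x y hxy hy
    exact hdist (pos x) (pos y) (key x y hxy).1.le (hposD y hy)
  have hfd2 : ∀ x y, x < m → y < m →
      G.dist (f x) (f y) = max (pos x) (pos y) - min (pos x) (pos y) := by
    intro x y hx hy
    rcases lt_trichotomy x y with h | h | h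
    · rw [hfd x y h hy]; have := (key x y h).1; omega
    · subst h; simp [SimpleGraph.dist_self]
    · rw [SimpleGraph.dist_comm, hfd y x h hx]; have := (key y x h).1; omega
  have hinj : Set.InjOn f ↑(Finset.range m) := by
    intro x hx y hy hxy
    simp only [Finset.coe_range, Set.mem_Iio] at hx hy
    by_contra hne
    rcases lt_or_gt_of_ne hne with h | h
    · have h1 := hfd x y h hy
      rw [hxy, SimpleGraph.dist_self] at h1
      have := (key x y h).1
      omega
    · have h1 := hfd y x h hx
      rw [hxy, SimpleGraph.dist_self] at h1
      have := (key y x h).1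
      omega
  set S : Set V := ↑(Finset.image f (Finset.range m)) with hS
  have hcard : S.ncard = m := by
    rw [hS, Set.ncard_coe_finset, Finset.card_image_of_injOn hinj, Finset.card_range]
  have hgp : IsGenDPos G k S := by
    intro a b c ha hb hc hab hac hbc heq hle'
    simp only [hS, Finset.coe_image, Finset.coe_range, Set.mem_image, Set.mem_Iio] at ha hb hc
    obtain ⟨i, hi, rfl⟩ := ha
    obtain ⟨j, hj, rfl⟩ := hb
    obtain ⟨l, hl, rfl⟩ := hc
    have hij : i ≠ j := fun h => hab (by rw [h])
    have hil : i ≠ l := fun h => hac (by rw [h])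
    have hjl : j ≠ l := fun h => hbc (by rw [h])
    rw [hfd2 i j hi hj, hfd2 j l hj hl, hfd2 i l hi hl] at heq
    rw [hfd2 i l hi hl] at hle'
    exact arith_key hK3 (fun x y h => (key x y h).1) (fun x y h => (key x y (by omega)).2 h)
      hij hil hjl heq (by omega)
  -- conclude
  have hmem : m ∈ {n | ∃ S : Set V, IsGenDPos G k S ∧ S.ncard = n} := ⟨S, hgp, hcard⟩
  have hbdd : BddAbove {n | ∃ S : Set V, IsGenDPos G k S ∧ S.ncard = n} := by
    refine ⟨Nat.card V, fun n hn => ?_⟩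
    obtain ⟨T, _, rfl⟩ := hn
    have := Set.ncard_le_ncard (Set.subset_univ T) Set.finite_univ
    simpa [Set.ncard_univ] using this
  have hfinal : m ≤ gpNum G k := le_csSup hbdd hmem
  have htarget : (D + 1 + k) / K = q + 1 := by
    have h1 : D + 1 + k = D + K := by omega
    rw [h1, Nat.add_div_right D (by omega : 0 < K)]
  rw [htarget]
  by_cases h0 : r = 0
  · rw [if_pos (by exact h0)]
    have : m = 2 * q + 1 := by simp [hm, h0]
    omega
  · rw [if_neg (by exact h0)]
    have : m = 2 * q + 2 := by simp [hm, h0]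
    omega
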